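/- For any nonnegative integer k, binom(-1/6,k)·binom(-5/6,k) = binom(3k,k)·binom(6k,3k)/432^k. -/

import Mathlib

/-- Generalized binomial coefficient for a rational `a`. -/
def qchoose (a : ℚ) (k : ℕ) : ℚ := (∏ i ∈ Finset.range k, (a - i)) / (Nat.factorial k)

lemma qchoose_succ (a : ℚ) (k : ℕ) :
    qchoose a (k+1) = qchoose a k * (a - k) / (k+1) := by
  have hk : (Nat.factorial k : ℚ) ≠ 0 := by positivity
  have h5 : (k:ℚ)+1 ≠ 0 := by positivity
  simp only [qchoose, Finset.prod_range_succ, Nat.factorial_succ]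
  push_cast
  rw [div_mul_eq_mul_div, div_div, mul_comm ((k:ℚ)+1)]

lemma aux_sixths (k : ℕ) :
    qchoose (-1/6) k * qchoose (-5/6) k
      = (Nat.factorial (6*k) : ℚ)
        / (Nat.factorial k * Nat.factorial (2*k) * Nat.factorial (3*k) * 432^k) := by
  induction k with
  | zero => simp [qchoose]
  | succ k ih =>
      rw [qchoose_succ, qchoose_succ]
      have e6 : 6*(k+1) = (6*k+5)+1 := by ring
      have e3 : 3*(k+1) = (3*k+2)+1 := by ring
      have e2 : 2*(k+1) = (2*k+1)+1 := by ring
      rw [e6, e3, e2]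
      simp only [Nat.factorial_succ]
      have h1 : (Nat.factorial k : ℚ) ≠ 0 := by positivity
      have h2 : (Nat.factorial (2*k) : ℚ) ≠ 0 := by positivity
      have h3 : (Nat.factorial (3*k) : ℚ) ≠ 0 := by positivity
      have h4 : ((432:ℚ))^k ≠ 0 := by positivity
      have h5 : (k:ℚ)+1 ≠ 0 := by positivity
      rw [div_mul_div_comm,
        show qchoose (-1/6) k * (-1/6 - (k:ℚ)) * (qchoose (-5/6) k * (-5/6 - (k:ℚ)))
          = qchoose (-1/6) k * qchoose (-5/6) k * ((-1/6 - (k:ℚ)) * (-5/6 - (k:ℚ))) from by ring,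
        ih]
      push_cast
      field_simp
      ring
  
theorem qchoose_sixths (k : ℕ) :
    qchoose (-1/6) k * qchoose (-5/6) k
      = (Nat.choose (3*k) k : ℚ) * (Nat.choose (6*k) (3*k) : ℚ) / 432^k := by
  rw [aux_sixths]
  rw [Nat.cast_choose ℚ (by omega : k ≤ 3*k), Nat.cast_choose ℚ (by omega : 3*k ≤ 6*k)]
  have e1 : 3*k - k = 2*k := by omega
  have e2 : 6*k - 3*k = 3*k := by omega
  rw [e1, e2]
  have h1 : (Nat.factorial k : ℚ) ≠ 0 := by positivity
  have h2 : (Nat.factorial (2*k) : ℚ) ≠ 0 := by positivity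
  have h3 : (Nat.factorial (3*k) : ℚ) ≠ 0 := by positivity
  have h4 : ((432:ℚ))^k ≠ 0 := by positivity
  field_simp
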